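/- arXiv:0910.0535 — 9 statements merged into one kernel-verified Lean document; each statement's English description precedes it below -/
import Mathlib

section
/- For any cardinals λ₁, λ₂ ≥ 1 and any semigroup S with zero, the Brandt λ₂⁰-extension of the Brandt λ₁⁰-extension of S is isomorphic to the Brandt λ⁰-extension of S, where λ = λ₁·λ₂. An explicit isomorphism is given by (α₂,(α₁,s,β₁),β₂) ↦ ((α₂,α₁), s, (β₁,β₂)) and 0 ↦ 0, indexing by I_λ = I_{λ₁} × I_{λ₂}. -/
attribute [local instance] Classical.propDecidable

/-- The Brandt `λ⁰`-extension of a semigroup `S` with zero, with index set `I`: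
its elements are `0` (encoded `none`) and triples `(α, s, β)` with `s ≠ 0`. -/
def Brandt (I S : Type*) [Zero S] : Type _ := Option (I × {s : S // s ≠ 0} × I)

instance brandtZero {I S : Type*} [Zero S] : Zero (Brandt I S) := ⟨none⟩

/-- Multiplication on the Brandt `λ⁰`-extension. -/
noncomputable def brandtMul {I S : Type*} [Zero S] [Mul S] :
    Brandt I S → Brandt I S → Brandt I S
  | some (α, a, β), some (γ, b, δ) =>
      if h : β = γ ∧ a.1 * b.1 ≠ 0 then some (α, ⟨a.1 * b.1, h.2⟩, δ) else none
  | _, _ => none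

noncomputable instance brandtMulInst {I S : Type*} [Zero S] [Mul S] :
    Mul (Brandt I S) := ⟨brandtMul⟩

/-- The semigroup of `I × I`-matrix units. -/
def MatrixUnits (I : Type*) := Option (I × I)

instance muZero {I : Type*} : Zero (MatrixUnits I) := ⟨none⟩

noncomputable instance muMul {I : Type*} : Mul (MatrixUnits I) :=
  ⟨fun x y => match x, y with
    | some (a, b), some (c, d) => if b = c then some (a, d) else none
    | _, _ => none⟩

/-- The subset of `Brandt I S` induced by a subset `T ⊆ S`
(the Brandt extension of `T` inside that of `S`). -/
def brandtSet {I S : Type*} [Zero S] (T : Set S) : Set (Brandt I S) :=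
  {z | z = 0 ∨ ∃ (α β : I) (s : {s : S // s ≠ 0}), s.1 ∈ T ∧ z = some (α, s, β)}

/-- The map `B⁰_{λ₁}(S) → B⁰_{λ₂}(T)` induced by `h : S → T`, an index map `φ`
and families `u`, `v` (`v` playing the role of `a ↦ u(a)⁻¹`):
`(α,s,β) ↦ (φ α, u α · h s · v β, φ β)` when the middle entry is nonzero, else `0`. -/
noncomputable def brandtHomMap {I₁ I₂ S T : Type*} [Zero S] [Zero T] [Mul T]
    (φ : I₁ → I₂) (u v : I₁ → T) (h : S → T) : Brandt I₁ S → Brandt I₂ T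
  | some (a, s, b) =>
      if hh : u a * h s.1 * v b ≠ 0 then
        some (φ a, ⟨u a * h s.1 * v b, hh⟩, φ b) else none
  | none => none

/-- The canonical copy of `S` in `Brandt I S` at index `α` (the set `S_{α,α}`). -/
noncomputable def brandtIncl {I S : Type*} [Zero S] (α : I) : S → Brandt I S :=
  fun s => if h : s = 0 then 0 else some (α, ⟨s, h⟩, α)

/-- The non-zero element `(α, s, β)` of `Brandt I S`. -/
def brandtElt {I S : Type*} [Zero S] (α : I) (s : {s : S // s ≠ 0}) (β : I) :
    Brandt I S := some (α, s, β)

noncomputable def brandtIterF {I₁ I₂ S : Type*} [Zero S] :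
    Brandt I₂ (Brandt I₁ S) → Brandt (I₂ × I₁) S
  | none => none
  | some (α₂, ⟨none, hx⟩, β₂) => absurd rfl hx
  | some (α₂, ⟨some (α₁, s, β₁), _⟩, β₂) => some ((α₂, α₁), s, (β₂, β₁))

noncomputable def brandtIterG {I₁ I₂ S : Type*} [Zero S] :
    Brandt (I₂ × I₁) S → Brandt I₂ (Brandt I₁ S)
  | none => none
  | some ((α₂, α₁), s, (β₂, β₁)) =>
      some (α₂, ⟨some (α₁, s, β₁), fun h => Option.some_ne_none _ h⟩, β₂)

lemma brandt_zero {I S : Type*} [Zero S] : (0 : Brandt I S) = none := rfl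

lemma brandt_mul_def {I S : Type*} [Zero S] [Mul S] (x y : Brandt I S) :
    x * y = brandtMul x y := rfl

lemma brandtMul_some {I S : Type*} [Zero S] [Mul S] (α β γ δ : I) (a b : {s : S // s ≠ 0}) :
    brandtMul (some (α, a, β) : Brandt I S) (some (γ, b, δ)) =
      if h : β = γ ∧ a.1 * b.1 ≠ 0 then some (α, ⟨a.1 * b.1, h.2⟩, δ) else none := rfl

lemma brandtIterF_some {I₁ I₂ S : Type*} [Zero S] (α₂ β₂ : I₂) (α₁ β₁ : I₁) (s : {s : S // s ≠ 0}) (hx) :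
    brandtIterF (some (α₂, ⟨(some (α₁, s, β₁) : Brandt I₁ S), hx⟩, β₂) : Brandt I₂ (Brandt I₁ S)) =
      some ((α₂, α₁), s, (β₂, β₁)) := rfl

lemma brandtIterF_eq {I₁ I₂ S : Type*} [Zero S] (α₂ β₂ : I₂) (x : Brandt I₁ S) (p : x ≠ 0)
    (α₁ β₁ : I₁) (s : {s : S // s ≠ 0}) (hx : x = some (α₁, s, β₁)) :
    brandtIterF (some (α₂, ⟨x, p⟩, β₂) : Brandt I₂ (Brandt I₁ S)) = some ((α₂, α₁), s, (β₂, β₁)) := by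
  subst hx; rfl

lemma iter_mul_core {I₁ I₂ S : Type*} [Zero S] [Mul S] (α₂ β₂ γ₂ δ₂ : I₂) (α₁ β₁ γ₁ δ₁ : I₁)
    (s t : {s : S // s ≠ 0}) (hx hy) :
    brandtIterF (brandtMul (some (α₂, ⟨(some (α₁, s, β₁) : Brandt I₁ S), hx⟩, β₂) : Brandt I₂ (Brandt I₁ S))
      (some (γ₂, ⟨(some (γ₁, t, δ₁) : Brandt I₁ S), hy⟩, δ₂))) =
    brandtMul (brandtIterF (some (α₂, ⟨(some (α₁, s, β₁) : Brandt I₁ S), hx⟩, β₂) : Brandt I₂ (Brandt I₁ S)))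
      (brandtIterF (some (γ₂, ⟨(some (γ₁, t, δ₁) : Brandt I₁ S), hy⟩, δ₂) : Brandt I₂ (Brandt I₁ S))) := by
  rw [brandtIterF_some, brandtIterF_some, brandtMul_some, brandtMul_some]
  split_ifs with hA hB hC
  · have e : brandtMul (some (α₁, s, β₁) : Brandt I₁ S) (some (γ₁, t, δ₁)) =
        some (α₁, ⟨s.1 * t.1, hB.2⟩, δ₁) := by
      rw [brandtMul_some, dif_pos ⟨(Prod.ext_iff.1 hB.1).2, hB.2⟩]
    exact brandtIterF_eq _ _ _ _ _ _ _ e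
  · exfalso
    have hin : β₁ = γ₁ ∧ s.1 * t.1 ≠ 0 := by
      by_contra hc
      exact hA.2 (by
        show brandtMul (some (α₁, s, β₁) : Brandt I₁ S) (some (γ₁, t, δ₁)) = none
        rw [brandtMul_some, dif_neg hc])
    exact hB ⟨Prod.ext hA.1 hin.1, hin.2⟩
  · exfalso
    apply hA
    refine ⟨congrArg Prod.fst hC.1, ?_⟩
    show brandtMul (some (α₁, s, β₁) : Brandt I₁ S) (some (γ₁, t, δ₁)) ≠ none
    rw [brandtMul_some, dif_pos ⟨congrArg Prod.snd hC.1, hC.2⟩]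
    exact Option.some_ne_none _
  · rfl

/-- `B⁰_{λ₂}(B⁰_{λ₁}(S)) ≅ B⁰_{λ₁·λ₂}(S)` via the explicit map
`(α₂,(α₁,s,β₁),β₂) ↦ ((α₂,α₁), s, (β₂,β₁))` and `0 ↦ 0`, indexing by `I₂ × I₁`. -/
theorem brandt_iterate {I₁ I₂ S : Type*} [SemigroupWithZero S] :
    ∃ f : Brandt I₂ (Brandt I₁ S) ≃* Brandt (I₂ × I₁) S,
      f 0 = 0 ∧
      ∀ (α₂ β₂ : I₂) (α₁ β₁ : I₁) (s : {s : S // s ≠ 0})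
        (h : brandtElt α₁ s β₁ ≠ (0 : Brandt I₁ S)),
        f (brandtElt α₂ ⟨brandtElt α₁ s β₁, h⟩ β₂) = brandtElt (α₂, α₁) s (β₂, β₁) := by
  have GF : ∀ x : Brandt I₂ (Brandt I₁ S), brandtIterG (brandtIterF x) = x := by
    rintro (_ | ⟨α₂, ⟨(_ | ⟨α₁, s, β₁⟩), hx⟩, β₂⟩)
    · rfl
    · exact absurd rfl hx
    · rfl
  have FG : ∀ x : Brandt (I₂ × I₁) S, brandtIterF (brandtIterG x) = x := by
    rintro (_ | ⟨⟨α₂, α₁⟩, s, ⟨β₂, β₁⟩⟩) <;> rfl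
  have Fmul : ∀ x y : Brandt I₂ (Brandt I₁ S),
      brandtIterF (x * y) = brandtIterF x * brandtIterF y := by
    rintro (_ | ⟨α₂, ⟨(_ | ⟨α₁, s, β₁⟩), hx⟩, β₂⟩) (_ | ⟨γ₂, ⟨(_ | ⟨γ₁, t, δ₁⟩), hy⟩, δ₂⟩) <;>
      first
      | rfl
      | exact absurd rfl hx
      | exact absurd rfl hy
      | · simp only [brandt_mul_def]
          by_cases h2 : β₁ = γ₁ <;> by_cases h3 : s.1 * t.1 = 0 <;>
            by_cases h1 : β₂ = γ₂ <;>
            exact iter_mul_core _ _ _ _ _ _ _ _ _ _ _ _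
  refine ⟨⟨⟨brandtIterF, brandtIterG, GF, FG⟩, Fmul⟩, rfl, ?_⟩
  intro α₂ β₂ α₁ β₁ s h
  rfl
end

section
/- For any cardinals λ, ν ≥ 1, the Brandt λ⁰-extension of the semigroup B_ν of I_ν × I_ν-matrix units is isomorphic to the semigroup of I_{λ·ν} × I_{λ·ν}-matrix units. -/
attribute [local instance] Classical.propDecidable

/- auxiliary -/

def bmuToF {I J : Type*} : Brandt I (MatrixUnits J) → MatrixUnits (I × J)
  | none => none
  | some (α, s, β) =>
    match s with
    | ⟨some (j₁, j₂), _⟩ => some ((α, j₁), (β, j₂))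
    | ⟨none, h⟩ => absurd rfl h

def bmuInvF {I J : Type*} : MatrixUnits (I × J) → Brandt I (MatrixUnits J)
  | none => none
  | some ((α, j₁), (β, j₂)) =>
      some (α, ⟨some (j₁, j₂), fun h => Option.some_ne_none _ h⟩, β)

def mu {J : Type*} (a b : J) : MatrixUnits J := some (a, b)

theorem muMul_def {J : Type*} (a b c d : J) :
    mu a b * mu c d = if b = c then mu a d else (0 : MatrixUnits J) := rfl

/-- The Brandt `λ⁰`-extension of the semigroup of `I_ν × I_ν`-matrix
units is isomorphic to the semigroup of `I_{λ·ν} × I_{λ·ν}`-matrix units. -/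
theorem brandt_of_matrixUnits {I J : Type*} [Nonempty I] [Nonempty J] :
    Nonempty (Brandt I (MatrixUnits J) ≃* MatrixUnits (I × J)) := by
  refine ⟨{ toFun := bmuToF, invFun := bmuInvF, left_inv := ?_, right_inv := ?_,
            map_mul' := ?_ }⟩
  · rintro (_ | ⟨α, ⟨(_ | ⟨j₁, j₂⟩), hs⟩, β⟩)
    · rfl
    · exact absurd rfl hs
    · rfl
  · rintro (_ | ⟨⟨α, j₁⟩, ⟨β, j₂⟩⟩)
    · rfl
    · rfl
  · rintro (_ | ⟨α, ⟨(_ | ⟨j₁, j₂⟩), hs⟩, β⟩) y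
    · rfl
    · exact absurd rfl hs
    · rcases y with (_ | ⟨γ, ⟨(_ | ⟨k₁, k₂⟩), ht⟩, δ⟩)
      · rfl
      · exact absurd rfl ht
      · show bmuToF (brandtMul _ _) =
          mu (α,j₁) (β,j₂) * mu (γ,k₁) (δ,k₂)
        show bmuToF (@dite (Brandt I (MatrixUnits J)) (β = γ ∧ mu j₁ j₂ * mu k₁ k₂ ≠ 0) _ (fun h => @id (Brandt I (MatrixUnits J)) (some (α, ⟨mu j₁ j₂ * mu k₁ k₂, h.2⟩, δ))) (fun _ => @id (Brandt I (MatrixUnits J)) none)) = _; rw [muMul_def (J := I × J)]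
        by_cases hc : (β, j₂) = ((γ, k₁) : I × J)
        · obtain ⟨h1, h2⟩ := Prod.mk.injEq .. ▸ hc
          subst h1; subst h2
          have hmul : mu j₁ j₂ * mu j₂ k₂ = mu j₁ k₂ := by
            rw [muMul_def]; simp
          rw [dif_pos ⟨rfl, show mu j₁ j₂ * mu j₂ k₂ ≠ 0 by
            rw [hmul]; exact fun h => Option.some_ne_none _ h⟩, if_pos hc]
          show bmuToF (some (α, ⟨mu j₁ j₂ * mu j₂ k₂, _⟩, δ)) = _
          rw [show (⟨mu j₁ j₂ * mu j₂ k₂, _⟩ :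
                {s : MatrixUnits J // s ≠ 0}) = ⟨mu j₁ k₂, fun h => Option.some_ne_none _ h⟩
              from Subtype.ext hmul]
          rfl
        · rw [if_neg hc]
          by_cases hβγ : β = γ
          · subst hβγ
            have hjk : j₂ ≠ k₁ := fun h => hc (by rw [h])
            have hmul : mu j₁ j₂ * mu k₁ k₂ = 0 := by
              rw [muMul_def, if_neg hjk]
            rw [dif_neg (by rintro ⟨-, h⟩; exact h hmul)]
            rfl
          · rw [dif_neg (by rintro ⟨h, -⟩; exact hβγ h)]
            rfl
end

section
/- If a semigroup S with zero is an orthogonal sum of a family of semigroups {S_α}_{α∈A} with zeros, then the Brandt λ⁰-extension B⁰_λ(S) is isomorphic to the orthogonal sum of the family {B⁰_λ(S_α)}_{α∈A}. -/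
attribute [local instance] Classical.propDecidable

/-- If `S` is the orthogonal sum of a family of subsemigroups
`{S_a}` with zeros, then `B⁰_λ(S)` is the orthogonal sum of the family
`{B⁰_λ(S_a)}`. -/
theorem brandt_orthogonal_sum {I S A : Type*} [SemigroupWithZero S]
    (Sf : A → Set S)
    (hzero : ∀ a, (0 : S) ∈ Sf a)
    (hsub : ∀ a, ∀ x ∈ Sf a, ∀ y ∈ Sf a, x * y ∈ Sf a)
    (hunion : ∀ s : S, ∃ a, s ∈ Sf a)
    (hint : ∀ a b, a ≠ b → Sf a ∩ Sf b = {0})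
    (hprod : ∀ a b, a ≠ b → ∀ x ∈ Sf a, ∀ y ∈ Sf b, x * y = 0) :
    (∀ a, ∀ x ∈ brandtSet (I := I) (Sf a), ∀ y ∈ brandtSet (I := I) (Sf a),
        x * y ∈ brandtSet (I := I) (Sf a)) ∧
    (∀ z : Brandt I S, ∃ a, z ∈ brandtSet (I := I) (Sf a)) ∧
    (∀ a b, a ≠ b →
        brandtSet (I := I) (Sf a) ∩ brandtSet (I := I) (Sf b) = {(0 : Brandt I S)}) ∧
    (∀ a b, a ≠ b → ∀ x ∈ brandtSet (I := I) (Sf a), ∀ y ∈ brandtSet (I := I) (Sf b),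
        x * y = 0) := by
  constructor
  · rintro a x (rfl | ⟨α, β, s, hs, rfl⟩) y hy
    · left
      show brandtMul none _ = _
      rfl
    · rcases hy with rfl | ⟨γ, δ, t, ht, rfl⟩
      · left
        show brandtMul _ none = _
        rfl
      · show brandtMul _ _ ∈ _
        unfold brandtMul
        dsimp only
        show (if h : β = γ ∧ s.1 * t.1 ≠ 0 then (some (α, ⟨s.1 * t.1, h.2⟩, δ) : Brandt I S) else (none : Brandt I S)) ∈ brandtSet (Sf a)
        split_ifs with h
        · exact Or.inr ⟨α, δ, _, hsub a _ hs _ ht, rfl⟩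
        · exact Or.inl rfl
  refine ⟨?_, ?_, ?_⟩
  · intro z
    match z with
    | none => exact ⟨(hunion (0 : S)).choose, Or.inl rfl⟩
    | some (α, s, β) =>
      obtain ⟨a, ha⟩ := hunion s.1
      exact ⟨a, Or.inr ⟨α, β, s, ha, rfl⟩⟩
  · intro a b hab
    ext z
    simp only [Set.mem_inter_iff, Set.mem_singleton_iff]
    constructor
    · rintro ⟨rfl | ⟨α, β, s, hs, rfl⟩, hb⟩
      · rfl
      · rcases hb with h0 | ⟨γ, δ, t, ht, heq⟩
        · exact h0
        · injection heq with heq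
          injection heq with h1 h2
          injection h2 with h3 h4
          subst h3
          have : s.1 ∈ Sf a ∩ Sf b := ⟨hs, ht⟩
          rw [hint a b hab] at this
          exact absurd this s.2
    · rintro rfl
      exact ⟨Or.inl rfl, Or.inl rfl⟩
  · rintro a b hab x (rfl | ⟨α, β, s, hs, rfl⟩) y hy
    · show brandtMul none _ = _; rfl
    · rcases hy with rfl | ⟨γ, δ, t, ht, rfl⟩
      · show brandtMul _ none = _; rfl
      · show brandtMul _ _ = _
        unfold brandtMul
        dsimp only
        show (if h : β = γ ∧ s.1 * t.1 ≠ 0 then (some (α, ⟨s.1 * t.1, h.2⟩, δ) : Brandt I S) else (none : Brandt I S)) = (0 : Brandt I S)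
        rw [dif_neg (fun h => h.2 (hprod a b hab _ hs _ ht))]
        rfl
end

section
/- For every cardinal λ ≥ 1, the Brandt λ⁰-extension B⁰_λ(S) of a semigroup S with zero is a primitive inverse semigroup if and only if S is a primitive inverse semigroup. -/
attribute [local instance] Classical.propDecidable

/-- An inverse semigroup: every element has a unique (generalized) inverse. -/
def IsInverseSemigroup (S : Type*) [Mul S] : Prop :=
  ∀ x : S, ∃! y : S, x * y * x = x ∧ y * x * y = y

/-- A primitive inverse semigroup with zero: an inverse semigroup in which
every nonzero idempotent is primitive (minimal among nonzero idempotents). -/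
def IsPrimitiveInverse (S : Type*) [Mul S] [Zero S] : Prop :=
  IsInverseSemigroup S ∧
    ∀ e f : S, e * e = e → f * f = f → e ≠ 0 → f ≠ 0 → e * f = e → f * e = e → e = f

section Aux
variable {I S : Type*} [SemigroupWithZero S]

def btrip (α : I) (a : {s : S // s ≠ 0}) (β : I) : Brandt I S := some (α, a, β)

lemma bmul_zero (x : Brandt I S) : x * (0 : Brandt I S) = 0 := by
  show brandtMul x none = none
  cases x <;> rfl

lemma zero_bmul (x : Brandt I S) : (0 : Brandt I S) * x = 0 := by
  show brandtMul none x = none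
  cases x <;> rfl

lemma some_bmul_some (α β γ δ : I) (a b : {s : S // s ≠ 0}) :
    btrip α a β * btrip γ b δ =
      if h : β = γ ∧ a.1 * b.1 ≠ 0 then btrip α ⟨a.1 * b.1, h.2⟩ δ else (0 : Brandt I S) := rfl

lemma btrip_ne_zero (α β : I) (a : {s : S // s ≠ 0}) :
    (btrip α a β : Brandt I S) ≠ 0 := fun h => Option.some_ne_none _ h

lemma btrip_inj {α β γ δ : I} {a b : {s : S // s ≠ 0}} (h : (btrip α a β : Brandt I S) = btrip γ b δ) :
    α = γ ∧ a.1 = b.1 ∧ β = δ := by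
  have h' : (some (α, a, β) : Option (I × {s : S // s ≠ 0} × I)) = some (γ, b, δ) := h
  simp only [Option.some.injEq, Prod.mk.injEq] at h'
  exact ⟨h'.1, congrArg Subtype.val h'.2.1, h'.2.2⟩
end Aux

section Main
variable {I S : Type*} [SemigroupWithZero S]

lemma btrip_ext {α β : I} {a b : {s : S // s ≠ 0}} (h : a.1 = b.1) :
    (btrip α a β : Brandt I S) = btrip α b β :=
  congrArg (fun z => btrip α z β) (Subtype.ext h)

/-- Characterization of generalized inverses of a triple in the Brandt extension. -/
lemma triple_inv (α β : I) (a : {s : S // s ≠ 0}) (Y : Brandt I S) :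
    (btrip α a β * Y * btrip α a β = btrip α a β ∧ Y * btrip α a β * Y = Y)
    ↔ ∃ b : {s : S // s ≠ 0}, Y = btrip β b α ∧ a.1 * b.1 * a.1 = a.1 ∧ b.1 * a.1 * b.1 = b.1 := by
  constructor
  · rintro ⟨h1, h2⟩
    cases Y with
    | none =>
        exfalso
        have h0 : (none : Brandt I S) = (0 : Brandt I S) := rfl
        rw [h0, bmul_zero, zero_bmul] at h1
        exact btrip_ne_zero α β a h1.symm
    | some y =>
        obtain ⟨γ, b, δ⟩ := y
        have hY : (some (γ, b, δ) : Brandt I S) = btrip γ b δ := rfl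
        rw [hY] at h1 h2 ⊢
        by_cases c1 : β = γ ∧ a.1 * b.1 ≠ 0
        · rw [some_bmul_some, dif_pos c1] at h1
          by_cases c2 : δ = α ∧ (a.1 * b.1) * a.1 ≠ 0
          · rw [some_bmul_some, dif_pos c2] at h1
            have hab : a.1 * b.1 * a.1 = a.1 := (btrip_inj h1).2.1
            obtain ⟨rfl, -⟩ := c1
            obtain ⟨rfl, -⟩ := c2
            refine ⟨b, rfl, hab, ?_⟩
            by_cases c3 : b.1 * a.1 = 0
            · exfalso
              rw [some_bmul_some, dif_neg (fun hc => hc.2 c3), zero_bmul] at h2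
              exact btrip_ne_zero _ _ _ h2.symm
            · rw [some_bmul_some, dif_pos ⟨rfl, c3⟩] at h2
              by_cases c4 : (b.1 * a.1) * b.1 = 0
              · exfalso
                rw [some_bmul_some, dif_neg (fun hc => hc.2 c4)] at h2
                exact btrip_ne_zero _ _ _ h2.symm
              · rw [some_bmul_some, dif_pos ⟨rfl, c4⟩] at h2
                exact (btrip_inj h2).2.1
          · exfalso
            rw [some_bmul_some, dif_neg c2] at h1
            exact btrip_ne_zero _ _ _ h1.symm
        · exfalso
          rw [some_bmul_some, dif_neg c1, zero_bmul] at h1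
          exact btrip_ne_zero _ _ _ h1.symm
  · rintro ⟨b, rfl, hab, hba⟩
    have hab0 : a.1 * b.1 ≠ 0 := fun h => a.2 (by rw [← hab, h, zero_mul])
    have hba0 : b.1 * a.1 ≠ 0 := fun h => b.2 (by rw [← hba, h, zero_mul])
    constructor
    · rw [some_bmul_some, dif_pos ⟨rfl, hab0⟩, some_bmul_some,
        dif_pos ⟨rfl, show a.1 * b.1 * a.1 ≠ 0 from by rw [hab]; exact a.2⟩]
      exact btrip_ext hab
    · rw [some_bmul_some, dif_pos ⟨rfl, hba0⟩, some_bmul_some,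
        dif_pos ⟨rfl, show b.1 * a.1 * b.1 ≠ 0 from by rw [hba]; exact b.2⟩]
      exact btrip_ext hba

end Main

lemma idem_char {I S : Type*} [SemigroupWithZero S] (E : Brandt I S) :
    E ≠ 0 → E * E = E →
      ∃ (β : I) (e : {s : S // s ≠ 0}), E = btrip β e β ∧ e.1 * e.1 = e.1 := by
  cases E with
  | none => intro h _; exact absurd rfl h
  | some x =>
      obtain ⟨β, e, δ⟩ := x
      intro _ hE
      rw [show (some (β, e, δ) : Brandt I S) = btrip β e δ from rfl] at hE ⊢
      by_cases c : δ = β ∧ e.1 * e.1 ≠ 0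
      · rw [some_bmul_some, dif_pos c] at hE
        exact ⟨β, e, by rw [c.1], (btrip_inj hE).2.1⟩
      · rw [some_bmul_some, dif_neg c] at hE
        exact absurd hE.symm (btrip_ne_zero _ _ _)


/-- `B⁰_λ(S)` is a primitive inverse semigroup iff `S` is. -/
theorem brandt_primitiveInverse_iff {I S : Type*} [SemigroupWithZero S] [Nonempty I] :
    IsPrimitiveInverse (Brandt I S) ↔ IsPrimitiveInverse S := by
  obtain ⟨α⟩ := ‹Nonempty I›
  constructor
  · rintro ⟨hinv, hprim⟩
    constructor
    · intro x
      by_cases hx : x = 0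
      · subst hx
        refine ⟨0, ⟨by rw [zero_mul, zero_mul], by rw [mul_zero]⟩, ?_⟩
        rintro y ⟨-, h2⟩
        rw [mul_zero, zero_mul] at h2
        exact h2.symm
      · obtain ⟨Y, hY, hYu⟩ := hinv (btrip α ⟨x, hx⟩ α)
        obtain ⟨b, rfl, hab, hba⟩ := (triple_inv α α ⟨x, hx⟩ Y).mp hY
        refine ⟨b.1, ⟨hab, hba⟩, ?_⟩
        rintro y ⟨u1, u2⟩
        have hy : y ≠ 0 := fun h => hx (by rw [← u1, h, mul_zero, zero_mul])
        have h := hYu (btrip α ⟨y, hy⟩ α)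
          ((triple_inv α α ⟨x, hx⟩ _).mpr ⟨⟨y, hy⟩, rfl, u1, u2⟩)
        exact (btrip_inj h).2.1
    · intro e f he hf he0 hf0 hef hfe
      have hE : (btrip α ⟨e, he0⟩ α : Brandt I S) * btrip α ⟨e, he0⟩ α = btrip α ⟨e, he0⟩ α := by
        rw [some_bmul_some, dif_pos ⟨rfl, show e * e ≠ 0 from by rw [he]; exact he0⟩]
        exact btrip_ext he
      have hF : (btrip α ⟨f, hf0⟩ α : Brandt I S) * btrip α ⟨f, hf0⟩ α = btrip α ⟨f, hf0⟩ α := by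
        rw [some_bmul_some, dif_pos ⟨rfl, show f * f ≠ 0 from by rw [hf]; exact hf0⟩]
        exact btrip_ext hf
      have hEF : (btrip α ⟨e, he0⟩ α : Brandt I S) * btrip α ⟨f, hf0⟩ α = btrip α ⟨e, he0⟩ α := by
        rw [some_bmul_some, dif_pos ⟨rfl, show e * f ≠ 0 from by rw [hef]; exact he0⟩]
        exact btrip_ext hef
      have hFE : (btrip α ⟨f, hf0⟩ α : Brandt I S) * btrip α ⟨e, he0⟩ α = btrip α ⟨e, he0⟩ α := by
        rw [some_bmul_some, dif_pos ⟨rfl, show f * e ≠ 0 from by rw [hfe]; exact he0⟩]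
        exact btrip_ext hfe
      have h := hprim _ _ hE hF (btrip_ne_zero _ _ _) (btrip_ne_zero _ _ _) hEF hFE
      exact (btrip_inj h).2.1
  · rintro ⟨hinv, hprim⟩
    constructor
    · intro X
      cases X with
      | none =>
          rw [show @none (I × {s : S // s ≠ 0} × I) = (0 : Brandt I S) from rfl]
          refine ⟨0, ⟨by rw [zero_bmul, zero_bmul], by rw [bmul_zero]⟩, ?_⟩
          rintro Y ⟨-, h2⟩
          rw [bmul_zero, zero_bmul] at h2
          exact h2.symm
      | some y =>
          obtain ⟨β, a, γ⟩ := y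
          rw [show (some (β, a, γ) : Brandt I S) = btrip β a γ from rfl]
          obtain ⟨y, ⟨h1, h2⟩, hu⟩ := hinv a.1
          have hy0 : y ≠ 0 := fun h => a.2 (by rw [← h1, h, mul_zero, zero_mul])
          refine ⟨btrip γ ⟨y, hy0⟩ β,
            (triple_inv β γ a _).mpr ⟨⟨y, hy0⟩, rfl, h1, h2⟩, ?_⟩
          intro Y hY
          obtain ⟨b, rfl, hab, hba⟩ := (triple_inv β γ a Y).mp hY
          exact btrip_ext (hu b.1 ⟨hab, hba⟩)
    · intro E F hE hF hE0 hF0 hEF hFE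
      obtain ⟨β, e, rfl, he⟩ := idem_char E hE0 hE
      obtain ⟨γ, f, rfl, hf⟩ := idem_char F hF0 hF
      by_cases cEF : β = γ ∧ e.1 * f.1 ≠ 0
      · rw [some_bmul_some, dif_pos cEF] at hEF
        have hef : e.1 * f.1 = e.1 := (btrip_inj hEF).2.1
        by_cases cFE : γ = β ∧ f.1 * e.1 ≠ 0
        · rw [some_bmul_some, dif_pos cFE] at hFE
          have hfe : f.1 * e.1 = e.1 := (btrip_inj hFE).2.1
          rw [cEF.1]
          exact btrip_ext (hprim e.1 f.1 he hf e.2 f.2 hef hfe)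
        · rw [some_bmul_some, dif_neg cFE] at hFE
          exact absurd hFE.symm (btrip_ne_zero _ _ _)
      · rw [some_bmul_some, dif_neg cEF] at hEF
        exact absurd hEF.symm (btrip_ne_zero _ _ _)
end

section
/- Let S and K be semigroups with S a monoid with zero, and let λ ≥ 2. A homomorphism h : B⁰_λ(S) → K is trivial (i.e., constant) if and only if its restriction to the subsemigroup B⁰_λ(1) of matrix units, namely {(α,1_S,β) : α,β ∈ I_λ} ∪ {0}, is a trivial homomorphism. -/
attribute [local instance] Classical.propDecidable

/-- For `λ ≥ 2`, a homomorphism `h : B⁰_λ(S) → K` is constant iff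
its restriction to the matrix units `{(α,1,β)} ∪ {0}` is constant. -/
theorem brandt_trivial_iff_trivial_on_units {I S K : Type*} [MonoidWithZero S] [Mul K]
    [Nontrivial I] (h1 : (1 : S) ≠ 0)
    (h : Brandt I S → K) (hmul : ∀ x y, h (x * y) = h x * h y) :
    (∀ x y : Brandt I S, h x = h y) ↔
      ((∀ α β γ δ : I,
          h (some (α, ⟨1, h1⟩, β)) = h (some (γ, ⟨1, h1⟩, δ))) ∧
        ∀ α β : I, h (some (α, ⟨1, h1⟩, β)) = h 0) := by
  constructor
  · intro hc
    exact ⟨fun α β γ δ => hc _ _, fun α β => hc _ _⟩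
  · rintro ⟨_, h0⟩
    have key : ∀ (γ δ : I) (s : {s : S // s ≠ 0}), h (some (γ, s, δ)) = h 0 := by
      intro γ δ s
      obtain ⟨γ', hγ'⟩ := exists_ne γ
      let e' : Brandt I S := some (γ', ⟨1, h1⟩, γ')
      let e : Brandt I S := some (γ, ⟨1, h1⟩, γ)
      let x : Brandt I S := some (γ, s, δ)
      have hz : e' * x = 0 := by
        show brandtMul _ _ = _
        exact dif_neg (fun hh => hγ' hh.1)
      have he : e * x = x := by
        show brandtMul _ _ = _
        refine (dif_pos (⟨rfl, by simpa using s.2⟩ : γ = γ ∧ (1 : S) * s.1 ≠ 0)).trans ?_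
        simp
        rfl
      have hk : h 0 = h 0 * h x := by
        calc h 0 = h (e' * x) := by rw [hz]
        _ = h e' * h x := hmul _ _
        _ = h 0 * h x := by rw [show h e' = h 0 from h0 γ' γ']
      calc h (some (γ, s, δ)) = h (e * x) := by rw [he]
        _ = h e * h x := hmul _ _
        _ = h 0 * h x := by rw [show h e = h 0 from h0 γ γ]
        _ = h 0 := hk.symm
    intro p q
    have all : ∀ z : Brandt I S, h z = h 0 := by
      intro z
      match z with
      | none => rfl
      | some (γ, s, δ) => exact key γ δ s
    rw [all p, all q]
end

section
/- Let S and T be monoids with zeros and λ₂ ≥ λ₁ ≥ 1 cardinals. Let σ : B⁰_{λ₁}(S) → B⁰_{λ₂}(T) be a non-trivial homomorphism. Suppose T does not contain a copy of the semigroup of I_{λ₁} × I_{λ₁}-matrix units, and T does not contain a copy of the semigroup of 2×2-matrix units B₂ whose zero is the zero of T. Then the image under σ of the zero of B⁰_{λ₁}(S) is the zero of B⁰_{λ₂}(T). -/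
attribute [local instance] Classical.propDecidable

/-! ### Auxiliary lemmas -/

/-- Constructor helper for nonzero elements of the Brandt extension. -/
def brandtEl {I S : Type*} [Zero S] (a : I) (s : {s : S // s ≠ 0}) (b : I) : Brandt I S :=
  some (a, s, b)

theorem brandtEl_inj {I S : Type*} [Zero S] {a b c d : I} {s t : {s : S // s ≠ 0}}
    (h : brandtEl a s b = brandtEl c t d) : a = c ∧ s.1 = t.1 ∧ b = d := by
  injection h with h'
  simp only [Prod.mk.injEq, Subtype.ext_iff] at h'
  exact ⟨h'.1, h'.2.1, h'.2.2⟩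

theorem brandtEl_ne_zero {I S : Type*} [Zero S] (a : I) (s : {s : S // s ≠ 0}) (b : I) :
    brandtEl a s b ≠ 0 := fun h => Option.some_ne_none (a, s, b) h

theorem brandt_cases' {I S : Type*} [Zero S] (z : Brandt I S) :
    z = 0 ∨ ∃ (a : I) (s : {s : S // s ≠ 0}) (b : I), z = brandtEl a s b :=
  match z with
  | none => Or.inl rfl
  | some (a, s, b) => Or.inr ⟨a, s, b, rfl⟩

/-- Constructor helper for nonzero matrix units. -/
def muEl {I : Type*} (a b : I) : MatrixUnits I := some (a, b)

theorem mu_cases' {I : Type*} (m : MatrixUnits I) : m = 0 ∨ ∃ a b, m = muEl a b :=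
  match m with
  | none => Or.inl rfl
  | some (a, b) => Or.inr ⟨a, b, rfl⟩

theorem brandt_mul_el {I S : Type*} [Zero S] [Mul S] (α β γ δ : I) (a b : {s : S // s ≠ 0}) :
    brandtEl α a β * brandtEl γ b δ =
      if h : β = γ ∧ a.1 * b.1 ≠ 0 then brandtEl α ⟨a.1 * b.1, h.2⟩ δ else 0 := rfl

theorem brandt_mul_zero' {I S : Type*} [Zero S] [Mul S] (x : Brandt I S) : x * 0 = 0 := by
  rcases brandt_cases' x with rfl | ⟨a, s, b, rfl⟩ <;> rfl

theorem brandt_zero_mul' {I S : Type*} [Zero S] [Mul S] (x : Brandt I S) : 0 * x = 0 := by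
  rcases brandt_cases' x with rfl | ⟨a, s, b, rfl⟩ <;> rfl

theorem mu_mul_el {I : Type*} (a b c d : I) :
    muEl a b * muEl c d = if b = c then muEl a d else (0 : MatrixUnits I) := rfl

theorem mu_mul_zero' {I : Type*} (m : MatrixUnits I) : m * 0 = 0 := by
  rcases mu_cases' m with rfl | ⟨a, b, rfl⟩ <;> rfl

theorem mu_zero_mul' {I : Type*} (m : MatrixUnits I) : 0 * m = 0 := by
  rcases mu_cases' m with rfl | ⟨a, b, rfl⟩ <;> rfl

theorem brandt_unit_mul {I S : Type*} [MulZeroOneClass S] (h1 : (1 : S) ≠ 0) (a b c : I) :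
    brandtEl a ⟨1, h1⟩ b * brandtEl b ⟨1, h1⟩ c = brandtEl a (⟨1, h1⟩ : {s : S // s ≠ 0}) c := by
  rw [brandt_mul_el, dif_pos ⟨rfl, show (1 : S) * 1 ≠ 0 by rw [one_mul]; exact h1⟩]
  exact congrArg (fun t => brandtEl a t c) (Subtype.ext (one_mul 1))

theorem brandt_unit_mul_ne {I S : Type*} [MulZeroOneClass S] (h1 : (1 : S) ≠ 0) {b c : I}
    (a d : I) (hbc : b ≠ c) :
    brandtEl a (⟨1, h1⟩ : {s : S // s ≠ 0}) b * brandtEl c ⟨1, h1⟩ d = 0 := by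
  rw [brandt_mul_el, dif_neg (fun h => hbc h.1)]

theorem brandt_unit_mul_left {I S : Type*} [MulZeroOneClass S] (h1 : (1 : S) ≠ 0) (c d : I)
    (s : {s : S // s ≠ 0}) :
    brandtEl c (⟨1, h1⟩ : {s : S // s ≠ 0}) c * brandtEl c s d = brandtEl c s d := by
  rw [brandt_mul_el, dif_pos ⟨rfl, show (1 : S) * s.1 ≠ 0 by rw [one_mul]; exact s.2⟩]
  exact congrArg (fun t => brandtEl c t d) (Subtype.ext (one_mul s.1))

/-- The canonical copy of the matrix units inside a Brandt extension. -/
noncomputable def muIntoBrandt {I S : Type*} [Zero S] [One S] (h1 : (1 : S) ≠ 0) :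
    MatrixUnits I → Brandt I S
  | none => 0
  | some p => brandtEl p.1 ⟨1, h1⟩ p.2

theorem muIntoBrandt_zero {I S : Type*} [Zero S] [One S] (h1 : (1 : S) ≠ 0) :
    muIntoBrandt (I := I) (S := S) h1 0 = 0 := rfl

theorem muIntoBrandt_el {I S : Type*} [Zero S] [One S] (h1 : (1 : S) ≠ 0) (a b : I) :
    muIntoBrandt (S := S) h1 (muEl a b) = brandtEl a ⟨1, h1⟩ b := rfl

theorem muIntoBrandt_mul {I S : Type*} [MulZeroOneClass S] (h1 : (1 : S) ≠ 0)
    (m m' : MatrixUnits I) :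
    muIntoBrandt (S := S) h1 (m * m') = muIntoBrandt h1 m * muIntoBrandt h1 m' := by
  rcases mu_cases' m with rfl | ⟨a, b, rfl⟩ <;> rcases mu_cases' m' with rfl | ⟨c, d, rfl⟩
  · rw [mu_zero_mul', muIntoBrandt_zero, brandt_zero_mul']
  · rw [mu_zero_mul', muIntoBrandt_zero, brandt_zero_mul']
  · rw [mu_mul_zero', muIntoBrandt_zero, brandt_mul_zero']
  · rw [mu_mul_el, muIntoBrandt_el, muIntoBrandt_el]
    by_cases hbc : b = c
    · subst hbc
      rw [if_pos rfl, muIntoBrandt_el, brandt_unit_mul]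
    · rw [if_neg hbc, brandt_unit_mul_ne h1 _ _ hbc, muIntoBrandt_zero]

/-- If `T` contains no copy of the `I × I`-matrix units and no copy
of the `2 × 2`-matrix units with zero the zero of `T`, then every non-trivial
homomorphism `σ : B⁰_{λ₁}(S) → B⁰_{λ₂}(T)` sends zero to zero. -/
theorem brandt_hom_zero_to_zero {I J S T : Type*} [MonoidWithZero S] [MonoidWithZero T]
    [Nonempty I] (ι : I ↪ J)
    (σ : Brandt I S → Brandt J T) (hmul : ∀ x y, σ (x * y) = σ x * σ y)
    (hnt : ∃ x y, σ x ≠ σ y)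
    (hno1 : ¬∃ f : MatrixUnits I → T,
        Function.Injective f ∧ ∀ x y, f (x * y) = f x * f y)
    (hno2 : ¬∃ f : MatrixUnits (Fin 2) → T,
        Function.Injective f ∧ (∀ x y, f (x * y) = f x * f y) ∧ f 0 = 0) :
    σ 0 = 0 := by
  by_contra h0
  rcases brandt_cases' (σ 0) with h | ⟨α, e, β, hp⟩
  · exact h0 h
  -- `1 ≠ 0` in `S`, otherwise `Brandt I S` is a singleton and `σ` is constant.
  have hS1 : (1 : S) ≠ 0 := by
    intro h1
    obtain ⟨x, y, hxy⟩ := hnt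
    have hall : ∀ z : Brandt I S, z = 0 := by
      intro z
      rcases brandt_cases' z with rfl | ⟨a, s, b, rfl⟩
      · rfl
      · exact absurd (by rw [← mul_one s.1, h1, mul_zero]) s.2
    rw [hall x, hall y] at hxy
    exact hxy rfl
  -- since `σ 0` is idempotent, `β = α`
  have h00 : σ 0 = σ 0 * σ 0 := by rw [← hmul, brandt_mul_zero']
  rw [hp, brandt_mul_el] at h00
  have hβα : β = α := by
    by_cases hc : β = α ∧ e.1 * e.1 ≠ 0
    · exact hc.1
    · rw [dif_neg hc] at h00
      exact absurd h00 (brandtEl_ne_zero _ _ _)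
  subst hβα
  -- every value of `σ` lies in the `(α, α)` corner, and `e` absorbs it
  have F1 : ∀ x : Brandt I S, ∃ s : {t : T // t ≠ 0},
      σ x = brandtEl β s β ∧ s.1 * e.1 = e.1 ∧ e.1 * s.1 = e.1 := by
    intro x
    have hr : σ x * σ 0 = σ 0 := by rw [← hmul, brandt_mul_zero']
    have hl : σ 0 * σ x = σ 0 := by rw [← hmul, brandt_zero_mul']
    rcases brandt_cases' (σ x) with h | ⟨a, s, b, hx⟩
    · rw [h, brandt_zero_mul', hp] at hr
      exact absurd hr.symm (brandtEl_ne_zero _ _ _)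
    · rw [hx, hp, brandt_mul_el] at hr
      rw [hx, hp, brandt_mul_el] at hl
      by_cases hc : b = β ∧ s.1 * e.1 ≠ 0
      · rw [dif_pos hc] at hr
        obtain ⟨ha, hse, -⟩ := brandtEl_inj hr
        by_cases hc' : β = a ∧ e.1 * s.1 ≠ 0
        · rw [dif_pos hc'] at hl
          obtain ⟨-, hes, -⟩ := brandtEl_inj hl
          exact ⟨s, by rw [hx, ha, hc.1], hse, hes⟩
        · rw [dif_neg hc'] at hl
          exact absurd hl.symm (brandtEl_ne_zero _ _ _)
      · rw [dif_neg hc] at hr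
        exact absurd hr.symm (brandtEl_ne_zero _ _ _)
  choose f hσ hre hle using F1
  have hf0 : (f 0).1 = e.1 := (brandtEl_inj ((hσ 0).symm.trans hp)).2.1
  -- the induced map into `T` is multiplicative
  have hm : ∀ x y : Brandt I S, (f (x * y)).1 = (f x).1 * (f y).1 := by
    intro x y
    have h := hmul x y
    rw [hσ, hσ, hσ, brandt_mul_el] at h
    by_cases hc : β = β ∧ (f x).1 * (f y).1 ≠ 0
    · rw [dif_pos hc] at h
      exact (brandtEl_inj h).2.1
    · rw [dif_neg hc] at h
      exact absurd h (brandtEl_ne_zero _ _ _)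
  -- if any matrix unit is sent to `e`, then `σ` is constant, a contradiction
  have key : ∀ a b : I, (f (brandtEl a ⟨1, hS1⟩ b)).1 = e.1 → False := by
    intro a b hab
    obtain ⟨x, y, hxy⟩ := hnt
    have hconst : ∀ z : Brandt I S, (f z).1 = e.1 := by
      intro z
      rcases brandt_cases' z with rfl | ⟨c, s, d, rfl⟩
      · exact hf0
      · have hcc : (f (brandtEl c ⟨1, hS1⟩ c)).1 = e.1 := by
          have heq : (brandtEl c (⟨1, hS1⟩ : {s : S // s ≠ 0}) c : Brandt I S)
              = brandtEl c ⟨1, hS1⟩ a * (brandtEl a ⟨1, hS1⟩ b * brandtEl b ⟨1, hS1⟩ c) := by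
            rw [brandt_unit_mul, brandt_unit_mul]
          rw [heq, hm, hm, hab, hle, hre]
        rw [← brandt_unit_mul_left hS1 c d s, hm, hcc, hle]
    exact hxy (by rw [hσ x, hσ y, Subtype.ext ((hconst x).trans (hconst y).symm)])
  -- otherwise we get an injective multiplicative map `MatrixUnits I → T`
  apply hno1
  refine ⟨fun m => (f (muIntoBrandt hS1 m)).1, ?_, ?_⟩
  · intro m m' hg
    rcases mu_cases' m with rfl | ⟨a, b, rfl⟩ <;> rcases mu_cases' m' with rfl | ⟨c, d, rfl⟩
    · rfl
    · simp only [muIntoBrandt_zero, muIntoBrandt_el] at hg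
      exact absurd (hg.symm.trans hf0) (fun h => key c d h)
    · simp only [muIntoBrandt_zero, muIntoBrandt_el] at hg
      exact absurd (hg.trans hf0) (fun h => key a b h)
    · simp only [muIntoBrandt_el] at hg
      by_cases hac : a = c
      · subst hac
        by_cases hbd : b = d
        · subst hbd; rfl
        · exfalso
          apply key a b
          have h1 : (f (brandtEl a ⟨1, hS1⟩ b)).1
              = (f (brandtEl a ⟨1, hS1⟩ b)).1 * (f (brandtEl b ⟨1, hS1⟩ b)).1 := by
            rw [← hm, brandt_unit_mul]
          rw [h1, hg, ← hm, brandt_unit_mul_ne hS1 a b (fun h => hbd h.symm), hf0]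
      · exfalso
        apply key a b
        have h1 : (f (brandtEl a ⟨1, hS1⟩ b)).1
            = (f (brandtEl a ⟨1, hS1⟩ a)).1 * (f (brandtEl a ⟨1, hS1⟩ b)).1 := by
          rw [← hm, brandt_unit_mul_left]
        rw [h1, hg, ← hm, brandt_unit_mul_ne hS1 a d hac, hf0]
  · intro m m'
    show (f (muIntoBrandt hS1 (m * m'))).1 = (f (muIntoBrandt hS1 m)).1 * (f (muIntoBrandt hS1 m')).1
    rw [muIntoBrandt_mul, hm]
end

section
/- Let S and T be monoids with zeros, λ₂ ≥ λ₁ ≥ 1 cardinals. Let h : S → T be a homomorphism with h(0_S) = 0_T, φ : I_{λ₁} → I_{λ₂} an injective map, e a non-zero idempotent of T, H_e the maximal subgroup of T with identity e, and u : I_{λ₁} → H_e a map. Then I_h = {s ∈ S : h(s) = 0_T} is an ideal of S, and the map σ : B⁰_{λ₁}(S) → B⁰_{λ₂}(T) given by σ(α,s,β) = (φ(α), u(α)·h(s)·u(β)⁻¹, φ(β)) for s ∉ I_h, σ(α,s,β) = 0₂ for s ∈ I_h∖{0_S}, and σ(0₁) = 0₂, is a non-trivial semigroup homomorphism. -/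
attribute [local instance] Classical.propDecidable

/-- Given a zero-preserving homomorphism `h : S → T` with `h 1 = e`
(`e` a nonzero idempotent), an injection `φ : I₁ → I₂`, and `u : I₁ → H_e`
(with pointwise group inverses `v`), the set `I_h = h⁻¹(0)` is an ideal of `S`
and the induced map `σ = brandtHomMap φ u v h` is a non-trivial homomorphism
`B⁰_{λ₁}(S) → B⁰_{λ₂}(T)` given by the stated formulas. -/
theorem brandt_hom_construction {I₁ I₂ S T : Type*}
    [MonoidWithZero S] [MonoidWithZero T] [Nonempty I₁]
    (h1S : (1 : S) ≠ 0)
    (h : S → T) (hm : ∀ s t : S, h (s * t) = h s * h t) (h0 : h 0 = 0)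
    (φ : I₁ → I₂) (hφ : Function.Injective φ)
    (e : T) (he : e * e = e) (he0 : e ≠ 0) (h1 : h 1 = e)
    (u v : I₁ → T)
    (hu : ∀ a : I₁, u a * e = u a ∧ e * u a = u a ∧ v a * e = v a ∧ e * v a = v a ∧
      u a * v a = e ∧ v a * u a = e) :
    ((0 : S) ∈ {s : S | h s = 0} ∧
      ∀ s ∈ {s : S | h s = 0}, ∀ t : S,
        s * t ∈ {s : S | h s = 0} ∧ t * s ∈ {s : S | h s = 0}) ∧
    (∀ x y : Brandt I₁ S,
      brandtHomMap φ u v h (x * y) = brandtHomMap φ u v h x * brandtHomMap φ u v h y) ∧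
    (∃ x y : Brandt I₁ S, brandtHomMap φ u v h x ≠ brandtHomMap φ u v h y) ∧
    brandtHomMap φ u v h (0 : Brandt I₁ S) = 0 ∧
    (∀ (a b : I₁) (s : {s : S // s ≠ 0}), h s.1 = 0 →
      brandtHomMap φ u v h (brandtElt a s b) = 0) ∧
    (∀ (a b : I₁) (s : {s : S // s ≠ 0}), h s.1 ≠ 0 →
      ∃ hw : u a * h s.1 * v b ≠ 0,
        brandtHomMap φ u v h (brandtElt a s b) =
          brandtElt (φ a) ⟨u a * h s.1 * v b, hw⟩ (φ b)) := by
  -- Basic consequences of `h 1 = e`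
  have hse : ∀ s : S, e * h s = h s := fun s => by rw [← h1, ← hm, one_mul]
  have hes : ∀ s : S, h s * e = h s := fun s => by rw [← h1, ← hm, mul_one]
  -- key nonvanishing lemma
  have key : ∀ (a b : I₁) (s : S), h s ≠ 0 → u a * h s * v b ≠ 0 := by
    intro a b s hs hc
    apply hs
    calc h s = e * h s * e := by rw [hse, hes]
      _ = (v a * u a) * h s * (v b * u b) := by
          rw [(hu a).2.2.2.2.2, (hu b).2.2.2.2.2]
      _ = v a * (u a * h s * v b) * u b := by simp only [mul_assoc]
      _ = 0 := by rw [hc, mul_zero, zero_mul]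
  have keyz : ∀ (a b : I₁) (s : S), h s = 0 → u a * h s * v b = 0 := by
    intro a b s hs; rw [hs, mul_zero, zero_mul]
  have mid : ∀ (α β δ : I₁) (s t : S),
      (u α * h s * v β) * (u β * h t * v δ) = u α * h (s * t) * v δ := by
    intro α β δ s t
    calc (u α * h s * v β) * (u β * h t * v δ)
        = u α * h s * ((v β * u β) * h t) * v δ := by simp only [mul_assoc]
      _ = u α * h s * (e * h t) * v δ := by rw [(hu β).2.2.2.2.2]
      _ = u α * (h s * h t) * v δ := by rw [hse, mul_assoc (u α)]
      _ = u α * h (s * t) * v δ := by rw [hm]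
  -- unfolding lemmas
  have mulS : ∀ x y : Brandt I₁ S, x * y = brandtMul x y := fun _ _ => rfl
  have mulT : ∀ x y : Brandt I₂ T, x * y = brandtMul x y := fun _ _ => rfl
  have σ0 : brandtHomMap φ u v h (none : Brandt I₁ S) = none := rfl
  have σs : ∀ (a b : I₁) (s : {s : S // s ≠ 0}),
      brandtHomMap φ u v h (some (a, s, b) : Brandt I₁ S) =
        if hh : u a * h s.1 * v b ≠ 0 then some (φ a, ⟨u a * h s.1 * v b, hh⟩, φ b)
        else none := fun _ _ _ => rfl
  have mdefS : ∀ (α β γ δ : I₁) (a b : {s : S // s ≠ 0}),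
      brandtMul (some (α, a, β) : Brandt I₁ S) (some (γ, b, δ)) =
        if hcond : β = γ ∧ a.1 * b.1 ≠ 0 then some (α, ⟨a.1 * b.1, hcond.2⟩, δ)
        else none := fun _ _ _ _ _ _ => rfl
  have mdefT : ∀ (α β γ δ : I₂) (a b : {s : T // s ≠ 0}),
      brandtMul (some (α, a, β) : Brandt I₂ T) (some (γ, b, δ)) =
        if hcond : β = γ ∧ a.1 * b.1 ≠ 0 then some (α, ⟨a.1 * b.1, hcond.2⟩, δ)
        else none := fun _ _ _ _ _ _ => rfl
  have mulL : ∀ x : Brandt I₂ T, brandtMul (none : Brandt I₂ T) x = none := by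
    intro x; cases x <;> rfl
  have mulR : ∀ x : Brandt I₂ T, brandtMul x (none : Brandt I₂ T) = none := by
    intro x; cases x <;> rfl
  refine ⟨⟨h0, ?_⟩, ?_, ?_, rfl, ?_, ?_⟩
  · intro s hs t
    constructor
    · show h (s * t) = 0
      rw [hm, hs, zero_mul]
    · show h (t * s) = 0
      rw [hm, hs, mul_zero]
  · -- homomorphism property
    intro x y
    rw [mulS, mulT]
    rcases x with _ | ⟨α, a, β⟩
    · cases y <;> rfl
    rcases y with _ | ⟨γ, b, δ⟩
    · rw [σ0, mulR]; rfl
    rw [mdefS]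
    by_cases hβγ : β = γ
    · subst hβγ
      by_cases hab : a.1 * b.1 = 0
      · rw [dif_neg (show ¬(β = β ∧ a.1 * b.1 ≠ 0) from fun hc => hc.2 hab), σ0, σs, σs]
        have hmab : h (a.1 * b.1) = 0 := by rw [hab, h0]
        by_cases ha : h a.1 = 0
        · rw [dif_neg (not_not_intro (keyz α β _ ha))]; exact (mulL _).symm
        · by_cases hb : h b.1 = 0
          · rw [dif_neg (not_not_intro (keyz β δ _ hb))]; exact (mulR _).symm
          · rw [dif_pos (key α β _ ha), dif_pos (key β δ _ hb), mdefT]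
            rw [dif_neg]
            rintro ⟨-, hne⟩
            exact hne (by rw [mid, hmab, mul_zero, zero_mul])
      · rw [dif_pos ⟨rfl, hab⟩, σs, σs, σs]
        by_cases hmab : h (a.1 * b.1) = 0
        · rw [dif_neg (not_not_intro (keyz α δ _ hmab))]
          by_cases ha : h a.1 = 0
          · rw [dif_neg (not_not_intro (keyz α β _ ha))]; exact (mulL _).symm
          · by_cases hb : h b.1 = 0
            · rw [dif_neg (not_not_intro (keyz β δ _ hb))]; exact (mulR _).symm
            · rw [dif_pos (key α β _ ha), dif_pos (key β δ _ hb), mdefT, dif_neg]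
              rintro ⟨-, hne⟩
              exact hne (by rw [mid, hmab, mul_zero, zero_mul])
        · have ha : h a.1 ≠ 0 := fun hh => hmab (by rw [hm, hh, zero_mul])
          have hb : h b.1 ≠ 0 := fun hh => hmab (by rw [hm, hh, mul_zero])
          rw [dif_pos (key α δ _ hmab), dif_pos (key α β _ ha),
            dif_pos (key β δ _ hb), mdefT,
            dif_pos ⟨rfl, by rw [mid]; exact key α δ _ hmab⟩]
          simp [mid]; rfl
    · rw [dif_neg (show ¬(β = γ ∧ a.1 * b.1 ≠ 0) from fun hc => hβγ hc.1), σ0, σs, σs]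
      by_cases ha : u α * h a.1 * v β = 0
      · rw [dif_neg (not_not_intro ha)]; exact (mulL _).symm
      · by_cases hb : u γ * h b.1 * v δ = 0
        · rw [dif_neg (not_not_intro hb)]; exact (mulR _).symm
        · rw [dif_pos ha, dif_pos hb, mdefT, dif_neg]
          rintro ⟨hφe, -⟩
          exact hβγ (hφ hφe)
  · -- nontriviality
    obtain ⟨α⟩ := ‹Nonempty I₁›
    refine ⟨some (α, ⟨1, h1S⟩, α), none, ?_⟩
    rw [σs, σ0, dif_pos]
    · exact Option.some_ne_none _
    · rw [h1, (hu α).1, (hu α).2.2.2.2.1]; exact he0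
  · intro a b s hs
    rw [brandtElt, σs, dif_neg (not_not_intro (keyz a b _ hs))]; rfl
  · intro a b s hs
    exact ⟨key a b _ hs, by rw [brandtElt, σs, dif_pos (key a b _ hs)]; rfl⟩
end

section
/- Let S and T be semilattices with identity and zero, and let (h,u,φ) and (f,v,ψ) be two triples where h, f : S → T are zero-preserving monoid-with-zero homomorphisms, u, v : I_{λ₁} → H(e) are maps into maximal subgroups at idempotents of T, and φ, ψ : I_{λ₁} → I_{λ₂} are injections. If the induced homomorphisms B(h,u,φ) and B(f,v,ψ) from B⁰_{λ₁}(S) to B⁰_{λ₂}(T) are equal, then h = f, u = v, and φ = ψ. -/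
attribute [local instance] Classical.propDecidable

/-- For semilattices `S`, `T` with identity and zero, the induced
homomorphism `B(h,u,φ) : B⁰_{λ₁}(S) → B⁰_{λ₂}(T)` determines the triple:
if `B(h,u,φ) = B(f,w,ψ)` then `h = f`, `u = w` and `φ = ψ`. -/
theorem brandt_hom_determines_triple {I₁ I₂ S T : Type*}
    [CommMonoidWithZero S] [CommMonoidWithZero T] [Nonempty I₁]
    (hidemS : ∀ x : S, x * x = x) (hidemT : ∀ x : T, x * x = x)
    (h1S : (1 : S) ≠ 0)
    (h f : S → T)
    (hm : ∀ s t : S, h (s * t) = h s * h t) (h0 : h 0 = 0) (h1 : h 1 ≠ 0)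
    (fm : ∀ s t : S, f (s * t) = f s * f t) (f0 : f 0 = 0) (f1 : f 1 ≠ 0)
    (φ ψ : I₁ → I₂) (hφ : Function.Injective φ) (hψ : Function.Injective ψ)
    (u uv w wv : I₁ → T)
    (hu : ∀ a : I₁, u a * h 1 = u a ∧ h 1 * u a = u a ∧
      uv a * h 1 = uv a ∧ h 1 * uv a = uv a ∧ u a * uv a = h 1 ∧ uv a * u a = h 1)
    (hw : ∀ a : I₁, w a * f 1 = w a ∧ f 1 * w a = w a ∧
      wv a * f 1 = wv a ∧ f 1 * wv a = wv a ∧ w a * wv a = f 1 ∧ wv a * w a = f 1)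
    (heq : brandtHomMap (I₁ := I₁) (S := S) φ u uv h = brandtHomMap ψ w wv f) :
    h = f ∧ u = w ∧ φ = ψ := by
  have hu1 : ∀ a, u a = h 1 := fun a => by
    have h5 := (hu a).2.2.2.2.1
    calc u a = u a * h 1 := ((hu a).1).symm
      _ = u a * (u a * uv a) := by rw [h5]
      _ = (u a * u a) * uv a := (mul_assoc _ _ _).symm
      _ = u a * uv a := by rw [hidemT]
      _ = h 1 := h5
  have huv1 : ∀ a, uv a = h 1 := fun a => by
    have h5 := (hu a).2.2.2.2.2
    calc uv a = uv a * h 1 := ((hu a).2.2.1).symm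
      _ = uv a * (uv a * u a) := by rw [h5]
      _ = (uv a * uv a) * u a := (mul_assoc _ _ _).symm
      _ = uv a * u a := by rw [hidemT]
      _ = h 1 := h5
  have hw1 : ∀ a, w a = f 1 := fun a => by
    have h5 := (hw a).2.2.2.2.1
    calc w a = w a * f 1 := ((hw a).1).symm
      _ = w a * (w a * wv a) := by rw [h5]
      _ = (w a * w a) * wv a := (mul_assoc _ _ _).symm
      _ = w a * wv a := by rw [hidemT]
      _ = f 1 := h5
  have hwv1 : ∀ a, wv a = f 1 := fun a => by
    have h5 := (hw a).2.2.2.2.2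
    calc wv a = wv a * f 1 := ((hw a).2.2.1).symm
      _ = wv a * (wv a * w a) := by rw [h5]
      _ = (wv a * wv a) * w a := (mul_assoc _ _ _).symm
      _ = wv a * w a := by rw [hidemT]
      _ = f 1 := h5
  have hmid : ∀ (a b : I₁) (s : S), u a * h s * uv b = h s := fun a b s => by
    rw [hu1, huv1, ← hm, one_mul, ← hm, mul_one]
  have fmid : ∀ (a b : I₁) (s : S), w a * f s * wv b = f s := fun a b s => by
    rw [hw1, hwv1, ← fm, one_mul, ← fm, mul_one]
  have key : ∀ (a b : I₁) (s : {s : S // s ≠ 0}),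
      (if hh : h s.1 ≠ 0 then (some (φ a, ⟨h s.1, hh⟩, φ b) : Brandt I₂ T) else none)
      = (if hh : f s.1 ≠ 0 then some (ψ a, ⟨f s.1, hh⟩, ψ b) else none) := by
    intro a b s
    have hK := congrFun heq (some (a, s, b))
    simp only [brandtHomMap] at hK
    rw [hmid a b, fmid a b] at hK
    exact hK
  obtain ⟨a0⟩ := ‹Nonempty I₁›
  have hef : h = f := by
    funext s
    by_cases hs : s = 0
    · rw [hs, h0, f0]
    · have k := key a0 a0 ⟨s, hs⟩
      by_cases c1 : h s ≠ 0 <;> by_cases c2 : f s ≠ 0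
      · rw [dif_pos c1, dif_pos c2] at k
        simp only [Option.some.injEq, Prod.mk.injEq, Subtype.mk.injEq] at k
        exact k.2.1
      · rw [dif_pos c1, dif_neg c2] at k
        exact nomatch k
      · rw [dif_neg c1, dif_pos c2] at k
        exact nomatch k
      · rw [not_not] at c1 c2
        rw [c1, c2]
  have hmain : ∀ a : I₁, φ a = ψ a ∧ h 1 = f 1 := by
    intro a
    have k := key a a ⟨1, h1S⟩
    rw [dif_pos h1, dif_pos f1] at k
    simp only [Option.some.injEq, Prod.mk.injEq, Subtype.mk.injEq] at k
    exact ⟨k.1, k.2.1⟩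
  refine ⟨hef, funext fun a => ?_, funext fun a => (hmain a).1⟩
  rw [hu1 a, hw1 a, (hmain a).2]
end

section
/- Let λ ≥ 1 be a finite cardinal and let (B⁰_λ(S), τ_B) be a topological semigroup structure on B⁰_λ(S) extending a topology τ on S via some copy S_{α,α} (i.e., τ_B restricted to S_{α,α} equals τ). If A is a non-empty open subset of S not containing 0_S, then A_{β,γ} = {(β,s,γ) : s ∈ A} is open in (B⁰_λ(S), τ_B) for all β, γ ∈ I_λ; and if A is open containing 0_S, then ⋃_{β,γ∈I_λ} A_{β,γ} (where A_{β,γ} includes the zero 0) is open in (B⁰_λ(S), τ_B). -/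
attribute [local instance] Classical.propDecidable

section AuxBrandt

variable {I S : Type*} [MonoidWithZero S]

lemma brandtIncl_zero (α : I) : brandtIncl (I := I) α (0 : S) = 0 := by
  simp [brandtIncl]

lemma brandt_opt_cases (z : Brandt I S) :
    z = 0 ∨ ∃ (b : I) (s : {s : S // s ≠ 0}) (c : I), z = brandtElt b s c := by
  have : ∀ w : Option (I × {s : S // s ≠ 0} × I),
      w = none ∨ ∃ b s c, w = some (b, s, c) := by
    rintro (_ | ⟨b, s, c⟩)
    · exact Or.inl rfl
    · exact Or.inr ⟨b, s, c, rfl⟩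
  exact this z

lemma brandt_f_zero (h1 : (1 : S) ≠ 0) (α β γ : I) :
    brandtElt α ⟨1, h1⟩ β * (0 : Brandt I S) * brandtElt γ ⟨1, h1⟩ α = 0 := rfl

lemma brandt_f_some (h1 : (1 : S) ≠ 0) (α β γ b c : I) (s : {s : S // s ≠ 0}) :
    brandtElt α ⟨1, h1⟩ β * brandtElt b s c * brandtElt γ ⟨1, h1⟩ α
      = if β = b ∧ c = γ then brandtIncl α s.1 else 0 := by
  show brandtMul (brandtMul _ _) _ = _
  have e : ∀ (x y z w : I) (a b : {s : S // s ≠ 0}), brandtMul (some (x, a, y)) (some (z, b, w))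
      = if h : y = z ∧ a.1 * b.1 ≠ 0 then some (x, ⟨a.1 * b.1, h.2⟩, w) else none :=
    fun _ _ _ _ _ _ => rfl
  by_cases hb : β = b
  · by_cases hc : c = γ
    · subst hb; subst hc
      simp [e, brandtElt, brandtIncl, s.2]
      rfl
    · subst hb
      simp only [e, brandtElt, s.2, hc]
      simp [e, s.2, hc]
      rfl
  · simp only [e, brandtElt]
    simp [hb]
    rfl

end AuxBrandt

/-- For a finite cardinal `λ ≥ 1` and a topological-semigroup topology
on `B⁰_λ(S)` restricting to the topology of `S` on some copy `S_{α,α}`: open sets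
`A ⊆ S` avoiding `0` yield open sets `A_{β,γ}`, and open sets containing `0` yield
open sets `⋃_{β,γ} A_{β,γ}` (including the zero). -/
theorem brandt_open_sets {I S : Type*} [MonoidWithZero S]
    [TopologicalSpace S] [ContinuousMul S] [Finite I] [Nonempty I]
    [TopologicalSpace (Brandt I S)] [ContinuousMul (Brandt I S)]
    (α : I) (hemb : Topology.IsEmbedding (brandtIncl (I := I) (S := S) α)) :
    (∀ A : Set S, IsOpen A → (0 : S) ∉ A → ∀ β γ : I,
      IsOpen {z : Brandt I S | ∃ s : {s : S // s ≠ 0}, s.1 ∈ A ∧ z = brandtElt β s γ}) ∧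
    (∀ A : Set S, IsOpen A → (0 : S) ∈ A →
      IsOpen {z : Brandt I S |
        z = 0 ∨ ∃ (β γ : I) (s : {s : S // s ≠ 0}), s.1 ∈ A ∧ z = brandtElt β s γ}) := by
  by_cases h1 : (1 : S) = 0
  · -- degenerate: S is trivial
    have hall : ∀ s : S, s = 0 := fun s => by rw [← one_mul s, h1, zero_mul]
    constructor
    · intro A _ hA0 β γ
      convert isOpen_empty
      ext z
      simp only [Set.mem_setOf_eq, Set.mem_empty_iff_false, iff_false]
      rintro ⟨s, hs, rfl⟩
      exact s.2 (hall s.1)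
    · intro A _ _
      convert isOpen_univ
      ext z
      simp only [Set.mem_setOf_eq, Set.mem_univ, iff_true]
      rcases brandt_opt_cases z with rfl | ⟨b, s, c, rfl⟩
      · exact Or.inl rfl
      · exact absurd (hall s.1) s.2
  · have hcont : ∀ β γ : I,
        Continuous fun z : Brandt I S =>
          brandtElt α ⟨1, h1⟩ β * z * brandtElt γ ⟨1, h1⟩ α :=
      fun β γ => (continuous_const.mul continuous_id).mul continuous_const
    constructor
    · intro A hA hA0 β γ
      obtain ⟨U, hU, hUA⟩ := hemb.isInducing.isOpen_iff.mp hA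
      have hmemU : ∀ s : S, brandtIncl (I := I) α s ∈ U ↔ s ∈ A := fun s => by
        rw [← hUA]; rfl
      have hset : {z : Brandt I S | ∃ s : {s : S // s ≠ 0}, s.1 ∈ A ∧ z = brandtElt β s γ}
          = (fun z : Brandt I S => brandtElt α ⟨1, h1⟩ β * z * brandtElt γ ⟨1, h1⟩ α) ⁻¹' U := by
        ext z
        simp only [Set.mem_setOf_eq, Set.mem_preimage]
        constructor
        · rintro ⟨s, hs, rfl⟩
          rw [brandt_f_some h1, if_pos ⟨rfl, rfl⟩]
          exact (hmemU s.1).mpr hs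
        · intro hz
          rcases brandt_opt_cases z with rfl | ⟨b, s, c, rfl⟩
          · rw [brandt_f_zero h1, ← brandtIncl_zero (I := I) α, hmemU] at hz
            exact absurd hz hA0
          · rw [brandt_f_some h1] at hz
            split_ifs at hz with h
            · obtain ⟨hb, hc⟩ := h
              subst hb; subst hc
              exact ⟨s, (hmemU s.1).mp hz, rfl⟩
            · rw [← brandtIncl_zero (I := I) α, hmemU] at hz
              exact absurd hz hA0
      rw [hset]
      exact hU.preimage (hcont β γ)
    · intro A hA hA0
      obtain ⟨U, hU, hUA⟩ := hemb.isInducing.isOpen_iff.mp hA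
      have hmemU : ∀ s : S, brandtIncl (I := I) α s ∈ U ↔ s ∈ A := fun s => by
        rw [← hUA]; rfl
      have h0U : (0 : Brandt I S) ∈ U := by
        rw [← brandtIncl_zero (I := I) α, hmemU]; exact hA0
      have hset : {z : Brandt I S |
            z = 0 ∨ ∃ (β γ : I) (s : {s : S // s ≠ 0}), s.1 ∈ A ∧ z = brandtElt β s γ}
          = ⋂ (β : I) (γ : I),
              (fun z : Brandt I S => brandtElt α ⟨1, h1⟩ β * z * brandtElt γ ⟨1, h1⟩ α) ⁻¹' U := by
        ext z
        simp only [Set.mem_setOf_eq, Set.mem_iInter, Set.mem_preimage]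
        rcases brandt_opt_cases z with rfl | ⟨b, s, c, rfl⟩
        · constructor
          · intro _ β γ
            rw [brandt_f_zero h1]; exact h0U
          · intro _; exact Or.inl rfl
        · constructor
          · rintro (h | ⟨β, γ, t, ht, heq⟩) β' γ'
            · exact absurd h (fun h => Option.some_ne_none _ h)
            · have h2 : (b, s, c) = (β, t, γ) := by
                have h3 : (some (b, s, c) : Option (I × {s : S // s ≠ 0} × I))
                    = some (β, t, γ) := heq
                exact Option.some.inj h3
              simp only [Prod.mk.injEq] at h2
              obtain ⟨rfl, rfl, rfl⟩ := h2
              rw [brandt_f_some h1]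
              split_ifs with h
              · exact (hmemU s.1).mpr ht
              · exact h0U
          · intro h
            refine Or.inr ⟨b, c, s, ?_, rfl⟩
            have := h b c
            rw [brandt_f_some h1, if_pos ⟨rfl, rfl⟩] at this
            exact (hmemU s.1).mp this
      rw [hset]
      exact isOpen_iInter_of_finite fun β =>
        isOpen_iInter_of_finite fun γ => hU.preimage (hcont β γ)
end
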